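/- arXiv:2008.03630 — 4 statements merged into one kernel-verified Lean document; each statement's English description precedes it below -/
import Mathlib

section
/- Let $\Phi$ be a root system of type $B_r$ ($r \ge 3$) with simple roots $\alpha_1,\dots,\alpha_r$ ($\alpha_r$ short) in the standard Bourbaki labelling, and let $m$ be a positive integer. Define $f_X$ on positive coroots by $f_X(\beta^\vee) = \sum_{i=1}^{r} \langle \omega_{\alpha_i}/n_i, \beta^\vee\rangle$ where $n_i = 2m$ for $i < r$ and $n_r = m$. Define $f_Y$ on positive roots by $f_Y(\beta) = \langle \rho^\vee, \beta/n_\beta\rangle$ where $n_\beta = 2m$ if $\beta$ is long and $n_\beta = m$ if $\beta$ is short, and $\rho^\vee$ is the half-sum of positive coroots. Then the image of $f_X$ on positive coroots equals the image of $f_Y$ on positive roots, and both equal $\{k/(2m) : 1 \le k \le 2r\}$. -/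
open scoped BigOperators

/-- Standard basis vector `e i` of `ℚ^r`. -/
def stdE (r : ℕ) (i : Fin r) : Fin r → ℚ := fun k => if k = i then 1 else 0

/-- Standard pairing (dot product) on `ℚ^r`, used as the pairing between the
weight space and the coweight space in the standard coordinates. -/
def dotQ {r : ℕ} (x y : Fin r → ℚ) : ℚ := ∑ k, x k * y k

/-- Positive roots of type `B_r` in the standard coordinates:
`e_i ± e_j` for `i < j` (long) and `e_i` (short). -/
def posRootsB (r : ℕ) : Set (Fin r → ℚ) :=
  {v | (∃ i j : Fin r, i < j ∧ (v = stdE r i - stdE r j ∨ v = stdE r i + stdE r j)) ∨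
       (∃ i : Fin r, v = stdE r i)}

/-- Positive coroots of type `B_r`: `e_i ± e_j` for `i < j` and `2e_i`. -/
def posCorootsB (r : ℕ) : Set (Fin r → ℚ) :=
  {v | (∃ i j : Fin r, i < j ∧ (v = stdE r i - stdE r j ∨ v = stdE r i + stdE r j)) ∨
       (∃ i : Fin r, v = (2 : ℚ) • stdE r i)}

/-- Fundamental weights of `B_r` (Bourbaki labelling, `0`-based index):
`ω_{α_i} = e_1 + ⋯ + e_i` for `i < r`, and `ω_{α_r} = (e_1 + ⋯ + e_r)/2`. -/
def omegaB (r : ℕ) (i : Fin r) : Fin r → ℚ :=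
  if (i : ℕ) = r - 1 then (fun _ => 1/2) else (fun k => if (k : ℕ) ≤ (i : ℕ) then 1 else 0)

/-- `ρ^∨`, the half-sum of the positive coroots of `B_r`; in standard coordinates
it equals `(r, r-1, …, 1)`. -/
def rhoCheckB (r : ℕ) : Fin r → ℚ := fun k => (r : ℚ) - (k : ℕ)

lemma dot_stdE {r : ℕ} (w : Fin r → ℚ) (i : Fin r) : dotQ w (stdE r i) = w i := by
  simp [dotQ, stdE, mul_ite]

lemma dot_sub {r : ℕ} (w x y : Fin r → ℚ) : dotQ w (x - y) = dotQ w x - dotQ w y := by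
  simp [dotQ, mul_sub, Finset.sum_sub_distrib]

lemma dot_add {r : ℕ} (w x y : Fin r → ℚ) : dotQ w (x + y) = dotQ w x + dotQ w y := by
  simp [dotQ, mul_add, Finset.sum_add_distrib]

lemma dot_smul {r : ℕ} (w : Fin r → ℚ) (c : ℚ) (x : Fin r → ℚ) :
    dotQ w (c • x) = c * dotQ w x := by
  simp [dotQ, Finset.mul_sum, mul_left_comm]

lemma colsum (r m : ℕ) (k : Fin r) :
    ∑ i : Fin r, omegaB r i k / (if (i : ℕ) = r - 1 then (m : ℚ) else 2 * m)
      = ((r : ℚ) - (k : ℕ)) / (2 * m) := by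
  have h1 : ∀ i : Fin r, omegaB r i k / (if (i : ℕ) = r - 1 then (m : ℚ) else 2 * m)
      = if (k : ℕ) ≤ (i : ℕ) then 1 / (2 * (m : ℚ)) else 0 := by
    intro i
    by_cases h : (i : ℕ) = r - 1
    · have hk : (k : ℕ) ≤ (i : ℕ) := by have := k.isLt; omega
      simp only [omegaB, if_pos h, if_pos hk]
      show (1 / 2 : ℚ) / m = 1 / (2 * m)
      rw [div_div]
    · simp only [omegaB, if_neg h]
      by_cases hk : (k : ℕ) ≤ (i : ℕ) <;> simp [hk]
  rw [Finset.sum_congr rfl (fun i _ => h1 i)]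
  rw [Fin.sum_univ_eq_sum_range (fun x => if (k : ℕ) ≤ x then 1 / (2 * (m : ℚ)) else 0) r]
  rw [← Finset.sum_filter]
  have hfil : (Finset.range r).filter (fun x => (k : ℕ) ≤ x) = Finset.Ico (k : ℕ) r := by
    ext x; simp [Finset.mem_Ico]; omega
  rw [hfil, Finset.sum_const, Nat.card_Ico, nsmul_eq_mul]
  have : ((r - (k : ℕ) : ℕ) : ℚ) = (r : ℚ) - (k : ℕ) := by
    have := k.isLt; push_cast [Nat.cast_sub this.le]; ring
  rw [this]; ring

lemma FX (r m : ℕ) (v : Fin r → ℚ) :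
    ∑ i : Fin r, dotQ (omegaB r i) v / (if (i : ℕ) = r - 1 then (m : ℚ) else 2 * m)
      = dotQ (rhoCheckB r) v / (2 * m) := by
  calc ∑ i : Fin r, dotQ (omegaB r i) v / (if (i : ℕ) = r - 1 then (m : ℚ) else 2 * m)
      = ∑ i : Fin r, ∑ k : Fin r,
          (omegaB r i k / (if (i : ℕ) = r - 1 then (m : ℚ) else 2 * m)) * v k := by
        refine Finset.sum_congr rfl fun i _ => ?_
        rw [dotQ, Finset.sum_div]
        exact Finset.sum_congr rfl fun k _ => by ring
    _ = ∑ k : Fin r, (∑ i : Fin r,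
          omegaB r i k / (if (i : ℕ) = r - 1 then (m : ℚ) else 2 * m)) * v k := by
        rw [Finset.sum_comm]
        exact Finset.sum_congr rfl fun k _ => (Finset.sum_mul _ _ _).symm
    _ = ∑ k : Fin r, (rhoCheckB r k * v k) / (2 * m) := by
        refine Finset.sum_congr rfl fun k _ => ?_
        rw [colsum r m k]; simp only [rhoCheckB]; ring
    _ = dotQ (rhoCheckB r) v / (2 * m) := by rw [dotQ, Finset.sum_div]

lemma selfdot_sub {r : ℕ} {a b : Fin r} (h : a ≠ b) :
    dotQ (stdE r a - stdE r b) (stdE r a - stdE r b) = 2 := by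
  rw [dot_sub, dot_stdE, dot_stdE]
  simp [stdE, h, Ne.symm h]
  norm_num

lemma selfdot_add {r : ℕ} {a b : Fin r} (h : a ≠ b) :
    dotQ (stdE r a + stdE r b) (stdE r a + stdE r b) = 2 := by
  rw [dot_add, dot_stdE, dot_stdE]
  simp [stdE, h, Ne.symm h]
  norm_num

lemma selfdot_one {r : ℕ} (a : Fin r) : dotQ (stdE r a) (stdE r a) = 1 := by
  rw [dot_stdE]; simp [stdE]

lemma rhoval_sub {r : ℕ} (a b : Fin r) :
    dotQ (rhoCheckB r) (stdE r a - stdE r b) = ((b : ℕ) : ℚ) - ((a : ℕ) : ℚ) := by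
  rw [dot_sub, dot_stdE, dot_stdE]; simp [rhoCheckB]

lemma rhoval_add {r : ℕ} (a b : Fin r) :
    dotQ (rhoCheckB r) (stdE r a + stdE r b) = 2 * (r : ℚ) - ((a : ℕ) : ℚ) - ((b : ℕ) : ℚ) := by
  rw [dot_add, dot_stdE, dot_stdE]; simp [rhoCheckB]; ring

lemma rhoval_one {r : ℕ} (a : Fin r) :
    dotQ (rhoCheckB r) (stdE r a) = (r : ℚ) - ((a : ℕ) : ℚ) := by
  rw [dot_stdE]; simp [rhoCheckB]

lemma rhoval_smul {r : ℕ} (a : Fin r) :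
    dotQ (rhoCheckB r) ((2 : ℚ) • stdE r a) = 2 * ((r : ℚ) - ((a : ℕ) : ℚ)) := by
  rw [dot_smul, dot_stdE]; simp [rhoCheckB]

lemma keyX (r m : ℕ) (hr : 3 ≤ r) (hm : 0 < m) :
    (fun v => ∑ i : Fin r, dotQ (omegaB r i) v /
        (if (i : ℕ) = r - 1 then (m : ℚ) else 2 * m)) '' posCorootsB r
      = {x : ℚ | ∃ k : ℕ, 1 ≤ k ∧ k ≤ 2 * r ∧ x = (k : ℚ) / (2 * m)} := by
  ext x
  simp only [Set.mem_image, Set.mem_setOf_eq]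
  constructor
  · rintro ⟨v, hv, rfl⟩
    rcases hv with ⟨a, b, hab, h | h⟩ | ⟨a, h⟩
    · subst h
      have hab' : (a : ℕ) < (b : ℕ) := hab
      have hb := b.isLt
      refine ⟨(b : ℕ) - (a : ℕ), by omega, by omega, ?_⟩
      rw [FX r m, rhoval_sub]
      congr 1
      push_cast [Nat.cast_sub hab'.le]
      ring
    · subst h
      have hab' : (a : ℕ) < (b : ℕ) := hab
      have hb := b.isLt
      refine ⟨2 * r - (a : ℕ) - (b : ℕ), by omega, by omega, ?_⟩
      rw [FX r m, rhoval_add]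
      congr 1
      push_cast [Nat.cast_sub (show (b:ℕ) ≤ 2 * r - (a:ℕ) by omega),
        Nat.cast_sub (show (a:ℕ) ≤ 2 * r by omega)]
      ring
    · subst h
      have ha := a.isLt
      refine ⟨2 * (r - (a : ℕ)), by omega, by omega, ?_⟩
      rw [FX r m, rhoval_smul]
      congr 1
      push_cast [Nat.cast_sub ha.le]
      ring
  · rintro ⟨k, hk1, hk2, rfl⟩
    by_cases h1 : k ≤ r - 1
    · refine ⟨stdE r ⟨0, by omega⟩ - stdE r ⟨k, by omega⟩,
        Or.inl ⟨⟨0, by omega⟩, ⟨k, by omega⟩, by simp [Fin.lt_def]; omega, Or.inl rfl⟩, ?_⟩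
      rw [FX r m, rhoval_sub]
      simp
    · by_cases h2 : k = 2 * r
      · refine ⟨(2 : ℚ) • stdE r ⟨0, by omega⟩, Or.inr ⟨⟨0, by omega⟩, rfl⟩, ?_⟩
        rw [FX r m, rhoval_smul]
        subst h2
        push_cast
        ring_nf
      · by_cases h3 : 2 * r - k ≤ r - 1
        · refine ⟨stdE r ⟨0, by omega⟩ + stdE r ⟨2 * r - k, by omega⟩,
            Or.inl ⟨⟨0, by omega⟩, ⟨2 * r - k, by omega⟩,
              by simp [Fin.lt_def]; omega, Or.inr rfl⟩, ?_⟩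
          rw [FX r m, rhoval_add]
          congr 1
          push_cast [Nat.cast_sub (show k ≤ 2 * r by omega)]
          ring
        · have hk : k = r := by omega
          refine ⟨stdE r ⟨1, by omega⟩ + stdE r ⟨r - 1, by omega⟩,
            Or.inl ⟨⟨1, by omega⟩, ⟨r - 1, by omega⟩,
              by simp [Fin.lt_def]; omega, Or.inr rfl⟩, ?_⟩
          rw [FX r m, rhoval_add]
          congr 1
          have hkq : (k : ℚ) = (r : ℚ) := by exact_mod_cast congrArg (Nat.cast (R := ℚ)) hk
          rw [hkq]
          push_cast [Nat.cast_sub (show 1 ≤ r by omega)]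
          ring

lemma keyY (r m : ℕ) (hr : 3 ≤ r) (hm : 0 < m) :
    (fun v => dotQ (rhoCheckB r) v /
        (if dotQ v v = 2 then (2 * (m : ℚ)) else (m : ℚ))) '' posRootsB r
      = {x : ℚ | ∃ k : ℕ, 1 ≤ k ∧ k ≤ 2 * r ∧ x = (k : ℚ) / (2 * m)} := by
  have hm' : (m : ℚ) ≠ 0 := by exact_mod_cast hm.ne'
  ext x
  simp only [Set.mem_image, Set.mem_setOf_eq]
  constructor
  · rintro ⟨v, hv, rfl⟩
    rcases hv with ⟨a, b, hab, h | h⟩ | ⟨a, h⟩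
    · subst h
      have hab' : (a : ℕ) < (b : ℕ) := hab
      have hb := b.isLt
      refine ⟨(b : ℕ) - (a : ℕ), by omega, by omega, ?_⟩
      rw [if_pos (selfdot_sub hab.ne), rhoval_sub]
      congr 1
      push_cast [Nat.cast_sub hab'.le]
      ring
    · subst h
      have hab' : (a : ℕ) < (b : ℕ) := hab
      have hb := b.isLt
      refine ⟨2 * r - (a : ℕ) - (b : ℕ), by omega, by omega, ?_⟩
      rw [if_pos (selfdot_add hab.ne), rhoval_add]
      congr 1
      push_cast [Nat.cast_sub (show (b:ℕ) ≤ 2 * r - (a:ℕ) by omega),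
        Nat.cast_sub (show (a:ℕ) ≤ 2 * r by omega)]
      ring
    · subst h
      have ha := a.isLt
      refine ⟨2 * (r - (a : ℕ)), by omega, by omega, ?_⟩
      rw [if_neg (by rw [selfdot_one]; norm_num), rhoval_one]
      rw [div_eq_div_iff hm' (by positivity)]
      push_cast [Nat.cast_sub ha.le]
      ring
  · rintro ⟨k, hk1, hk2, rfl⟩
    by_cases h1 : k ≤ r - 1
    · refine ⟨stdE r ⟨0, by omega⟩ - stdE r ⟨k, by omega⟩,
        Or.inl ⟨⟨0, by omega⟩, ⟨k, by omega⟩, by simp [Fin.lt_def]; omega, Or.inl rfl⟩, ?_⟩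
      have hne : (⟨0, by omega⟩ : Fin r) ≠ ⟨k, by omega⟩ := by
        simp [Fin.ext_iff]; omega
      rw [if_pos (selfdot_sub hne), rhoval_sub]
      simp
    · by_cases h2 : k = 2 * r
      · refine ⟨stdE r ⟨0, by omega⟩, Or.inr ⟨⟨0, by omega⟩, rfl⟩, ?_⟩
        rw [if_neg (by rw [selfdot_one]; norm_num), rhoval_one]
        rw [div_eq_div_iff hm' (by positivity)]
        subst h2
        push_cast
        ring
      · by_cases h3 : 2 * r - k ≤ r - 1
        · refine ⟨stdE r ⟨0, by omega⟩ + stdE r ⟨2 * r - k, by omega⟩,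
            Or.inl ⟨⟨0, by omega⟩, ⟨2 * r - k, by omega⟩,
              by simp [Fin.lt_def]; omega, Or.inr rfl⟩, ?_⟩
          have hne : (⟨0, by omega⟩ : Fin r) ≠ ⟨2 * r - k, by omega⟩ := by
            simp [Fin.ext_iff]; omega
          rw [if_pos (selfdot_add hne), rhoval_add]
          congr 1
          push_cast [Nat.cast_sub (show k ≤ 2 * r by omega)]
          ring
        · have hk : k = r := by omega
          refine ⟨stdE r ⟨1, by omega⟩ + stdE r ⟨r - 1, by omega⟩,
            Or.inl ⟨⟨1, by omega⟩, ⟨r - 1, by omega⟩,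
              by simp [Fin.lt_def]; omega, Or.inr rfl⟩, ?_⟩
          have hne : (⟨1, by omega⟩ : Fin r) ≠ ⟨r - 1, by omega⟩ := by
            simp [Fin.ext_iff]; omega
          rw [if_pos (selfdot_add hne), rhoval_add]
          congr 1
          have hkq : (k : ℚ) = (r : ℚ) := by exact_mod_cast congrArg (Nat.cast (R := ℚ)) hk
          rw [hkq]
          push_cast [Nat.cast_sub (show 1 ≤ r by omega)]
          ring


/-- Type `B_r` (`r ≥ 3`), Bourbaki labelling with `α_r` short, `m ≥ 1`.
With `n_i = 2m` for `i < r` and `n_r = m`, set `f_X(β^∨) = ∑ᵢ ⟨ω_{α_i}/n_i, β^∨⟩` on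
positive coroots, and `f_Y(β) = ⟨ρ^∨, β/n_β⟩` on positive roots, where `n_β = 2m` for
`β` long (i.e. `⟨β,β⟩ = 2`) and `n_β = m` for `β` short.  Then the images of `f_X` and
`f_Y` coincide and both equal `{k/(2m) : 1 ≤ k ≤ 2r}`. -/
theorem statement1 (r m : ℕ) (hr : 3 ≤ r) (hm : 0 < m) :
    ((fun v => ∑ i : Fin r, dotQ (omegaB r i) v /
        (if (i : ℕ) = r - 1 then (m : ℚ) else 2 * m)) '' posCorootsB r
      = (fun v => dotQ (rhoCheckB r) v /
          (if dotQ v v = 2 then (2 * (m : ℚ)) else (m : ℚ))) '' posRootsB r) ∧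
    ((fun v => ∑ i : Fin r, dotQ (omegaB r i) v /
        (if (i : ℕ) = r - 1 then (m : ℚ) else 2 * m)) '' posCorootsB r
      = {x : ℚ | ∃ k : ℕ, 1 ≤ k ∧ k ≤ 2 * r ∧ x = (k : ℚ) / (2 * m)}) := by
  exact ⟨(keyX r m hr hm).trans (keyY r m hr hm).symm, keyX r m hr hm⟩
end

section
/- Let $Y = \mathbb{Z}^r$ be the cocharacter lattice of $\mathrm{Sp}_{2r}$ with simple coroots $\alpha_i^\vee = e_i - e_{i+1}$ for $1 \le i < r$ and $\alpha_r^\vee = e_r$, and let $Q: Y \to \mathbb{Z}$ be the Weyl-invariant quadratic form with $Q(\alpha_r^\vee) = 1$ (equivalently $Q(\sum c_i e_i) = \sum c_i^2$). Let $n = 2m$ with $m$ even, and set $Y_{Q,n} = \{y \in Y : B_Q(y,z) \in n\mathbb{Z}\ \forall z \in Y\}$ where $B_Q$ is the associated bilinear form, and let $Y_{Q,n}^{sc}$ be the lattice spanned by the elements $n_{\alpha}\alpha^\vee$ with $n_\alpha = n/\gcd(n, Q(\alpha^\vee))$ for simple roots $\alpha$. Then $Y_{Q,n} = m\mathbb{Z}^r$,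 and $Y_{Q,n}^{sc} = \{\sum_i c_i \alpha_i^\vee : m \mid c_i \text{ for } i < r,\ n \mid c_r\}$. -/
open scoped BigOperators

/-- Standard basis vector of `ℤ^r`. -/
def eZ (r : ℕ) (i : Fin r) : Fin r → ℤ := fun k => if k = i then 1 else 0

/-- The Weyl-invariant quadratic form on the cocharacter lattice `Y = ℤ^r` of
`Sp_{2r}` with `Q(α_r^∨) = 1`: `Q(∑ cᵢ eᵢ) = ∑ cᵢ²`. -/
def QSp (r : ℕ) (y : Fin r → ℤ) : ℤ := ∑ i, (y i) ^ 2

/-- The associated bilinear form `B_Q(y,z) = Q(y+z) - Q(y) - Q(z)`. -/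
def BQSp (r : ℕ) (y z : Fin r → ℤ) : ℤ := QSp r (y + z) - QSp r y - QSp r z

/-- Simple coroots of `Sp_{2r}`: `α_i^∨ = e_i - e_{i+1}` for `i < r`, `α_r^∨ = e_r`. -/
def simpleCorootC (r : ℕ) (i : Fin r) : Fin r → ℤ :=
  if h : (i : ℕ) + 1 < r then eZ r i - eZ r ⟨(i : ℕ) + 1, h⟩ else eZ r i

/-- `n_α = n / gcd(n, Q(α^∨))` for a simple root `α`. -/
def nAlphaC (r n : ℕ) (i : Fin r) : ℕ := n / Nat.gcd n (QSp r (simpleCorootC r i)).toNat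

/-- `Y_{Q,n} = {y ∈ Y : B_Q(y, z) ∈ nℤ for all z ∈ Y}`. -/
def YQnSp (r n : ℕ) : Set (Fin r → ℤ) := {y | ∀ z, (n : ℤ) ∣ BQSp r y z}

/-- `Y_{Q,n}^{sc}`, the sublattice spanned by the rescaled simple coroots `n_α α^∨`. -/
def YQnscSp (r n : ℕ) : AddSubgroup (Fin r → ℤ) :=
  AddSubgroup.closure {v | ∃ i : Fin r, v = (nAlphaC r n i : ℤ) • simpleCorootC r i}

lemma QSp_eZ (r : ℕ) (i : Fin r) : QSp r (eZ r i) = 1 := by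
  unfold QSp eZ
  rw [Finset.sum_eq_single i] <;> simp +contextual

lemma QSp_coroot (r : ℕ) (i : Fin r) :
    QSp r (simpleCorootC r i) = if (i : ℕ) + 1 < r then 2 else 1 := by
  unfold simpleCorootC
  split_ifs with h
  · have hne : i ≠ (⟨(i : ℕ) + 1, h⟩ : Fin r) := by
      intro hc; have := congrArg Fin.val hc; simp at this
    unfold QSp
    have : ∀ k : Fin r, ((eZ r i - eZ r ⟨(i : ℕ) + 1, h⟩) k) ^ 2 =
        (if k = i then 1 else 0) + (if k = (⟨(i : ℕ) + 1, h⟩ : Fin r) then 1 else 0) := by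
      intro k
      simp only [Pi.sub_apply, eZ]
      split_ifs with h1 h2 h2
      · exact absurd (h1 ▸ h2) (by simpa [h1] using hne)
      · ring
      · ring
      · ring
    rw [Finset.sum_congr rfl fun k _ => this k, Finset.sum_add_distrib]
    simp
  · exact QSp_eZ r i

lemma nAlphaC_eq (r m : ℕ) (hm : 0 < m) (i : Fin r) :
    nAlphaC r (2 * m) i = if (i : ℕ) + 1 < r then m else 2 * m := by
  unfold nAlphaC
  rw [QSp_coroot]
  split_ifs with h
  · show 2 * m / Nat.gcd (2 * m) ((2 : ℤ).toNat) = m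
    have : Nat.gcd (2 * m) 2 = 2 := by
      have := Nat.gcd_mul_left 2 m 1
      simpa using this
    simp [this]
  · show 2 * m / Nat.gcd (2 * m) ((1 : ℤ).toNat) = 2 * m
    simp

lemma BQSp_eq (r : ℕ) (y z : Fin r → ℤ) : BQSp r y z = 2 * ∑ i, y i * z i := by
  unfold BQSp QSp
  rw [Finset.mul_sum, ← Finset.sum_sub_distrib, ← Finset.sum_sub_distrib]
  exact Finset.sum_congr rfl fun i _ => by simp [Pi.add_apply]; ring

/-- For `Sp_{2r}` with `Q(α_r^∨) = 1` and `n = 2m`, `m` even: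
`Y_{Q,n} = mℤ^r`, and `Y_{Q,n}^{sc} = {∑ cᵢ αᵢ^∨ : m ∣ cᵢ for i < r, n ∣ c_r}`. -/
theorem statement4 (r m : ℕ) (hr : 0 < r) (hm : 0 < m) (hmeven : Even m) :
    YQnSp r (2 * m) = {y | ∀ i, (m : ℤ) ∣ y i} ∧
    (YQnscSp r (2 * m) : Set (Fin r → ℤ)) =
      {y | ∃ c : Fin r → ℤ, y = ∑ i, c i • simpleCorootC r i ∧
        (∀ i : Fin r, (i : ℕ) + 1 < r → (m : ℤ) ∣ c i) ∧
        (2 * (m : ℤ)) ∣ c ⟨r - 1, by omega⟩} := by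
  constructor
  · ext y
    simp only [YQnSp, Set.mem_setOf_eq]
    constructor
    · intro h i
      have := h (eZ r i)
      rw [BQSp_eq] at this
      have hsum : ∑ j, y j * eZ r i j = y i := by
        unfold eZ
        rw [Finset.sum_eq_single i] <;> simp +contextual
      rw [hsum] at this
      push_cast at this
      exact (mul_dvd_mul_iff_left (two_ne_zero (α := ℤ))).mp this
    · intro h z
      rw [BQSp_eq]
      push_cast
      exact mul_dvd_mul_left 2 (Finset.dvd_sum fun i _ => (h i).mul_right _)
  · ext y
    simp only [SetLike.mem_coe, Set.mem_setOf_eq]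
    constructor
    · intro hy
      refine AddSubgroup.closure_induction ?_ ?_ ?_ ?_ hy
      · rintro x ⟨i, rfl⟩
        refine ⟨fun j => if j = i then (nAlphaC r (2 * m) i : ℤ) else 0, ?_, ?_, ?_⟩
        · rw [Finset.sum_eq_single i]
          · simp
          · intro j _ hj; simp [hj]
          · simp
        · intro j hj
          by_cases hji : j = i
          · subst hji
            simp [nAlphaC_eq r m hm, hj]
          · simp [hji]
        · by_cases hlast : (⟨r - 1, by omega⟩ : Fin r) = i
          · subst hlast
            have hn : ¬ ((⟨r - 1, by omega⟩ : Fin r) : ℕ) + 1 < r := by simp; omega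
            simp [nAlphaC_eq r m hm, hn]
          · simp [hlast]
      · exact ⟨0, by simp, by simp, by simp⟩
      · rintro x y' _ _ ⟨c, rfl, h1, h2⟩ ⟨c', rfl, h1', h2'⟩
        refine ⟨c + c', ?_, fun i hi => dvd_add (h1 i hi) (h1' i hi), dvd_add h2 h2'⟩
        rw [← Finset.sum_add_distrib]
        exact Finset.sum_congr rfl fun i _ => by simp [add_smul]
      · rintro x _ ⟨c, rfl, h1, h2⟩
        refine ⟨-c, ?_, fun i hi => (h1 i hi).neg_right, h2.neg_right⟩
        rw [← Finset.sum_neg_distrib]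
        exact Finset.sum_congr rfl fun i _ => by simp
    · rintro ⟨c, rfl, h1, h2⟩
      refine AddSubgroup.sum_mem _ fun i _ => ?_
      have hgen : (nAlphaC r (2 * m) i : ℤ) • simpleCorootC r i ∈ YQnscSp r (2 * m) :=
        AddSubgroup.subset_closure ⟨i, rfl⟩
      have hdvd : (nAlphaC r (2 * m) i : ℤ) ∣ c i := by
        rw [nAlphaC_eq r m hm]
        by_cases hi : (i : ℕ) + 1 < r
        · rw [if_pos hi]; exact_mod_cast h1 i hi
        · rw [if_neg hi]
          have : i = (⟨r - 1, by omega⟩ : Fin r) := by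
            apply Fin.ext; have := i.isLt; simp; omega
          rw [this]; push_cast; exact h2
      obtain ⟨d, hd⟩ := hdvd
      rw [hd, mul_comm ((nAlphaC r (2 * m) i : ℤ)) d, mul_smul]
      exact AddSubgroup.zsmul_mem _ hgen d
end

section
/- Let $(X, \Phi, \Delta; Y, \Phi^\vee, \Delta^\vee)$ be the root datum of a split reductive group with root system of rank at least 2, and suppose $\alpha \in \Delta$ satisfies $\langle \alpha, y\rangle \in 2\mathbb{Z}$ for all $y \in Y$. Then $\alpha$ is a long simple root and the root system is of type $C_r$ (where for rank considerations type $C_1 = A_1$ counts its root as long). -/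
open scoped BigOperators

/-- The Cartan matrix of type `C_r` (Bourbaki labelling, `0`-based indices, `α_r`
the unique long simple root; for `r = 1` this is the `A_1` Cartan matrix, the root
counting as long): `A i i = 2`, `A i j = -1` for adjacent `i,j` except
`A_{r-1, r-2} = ⟨α_r, α_{r-1}^∨⟩ = -2`, and `A i j = 0` otherwise. -/
def cartanMatrixC (r : ℕ) : Fin r → Fin r → ℤ := fun i j =>
  if i = j then 2
  else if (i : ℕ) = (j : ℕ) + 1 ∧ (i : ℕ) = r - 1 then -2
  else if (i : ℕ) = (j : ℕ) + 1 ∨ (j : ℕ) = (i : ℕ) + 1 then -1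
  else 0

section Aux

open Classical

set_option linter.unusedSectionVars false

variable {ι : Type*} [Fintype ι]

/-- A chain `α = c 0 — c 1 — ⋯ — c n` of simple roots, with the double bond at `α`. -/
def ChainP (A : ι → ι → ℤ) (α : ι) (n : ℕ) (c : ℕ → ι) : Prop :=
  c 0 = α ∧
  (∀ i j, i ≤ n → j ≤ n → c i = c j → i = j) ∧
  (∀ i, i < n → A (c i) (c (i + 1)) = (if i = 0 then -2 else -1) ∧
      A (c (i + 1)) (c i) = -1) ∧
  (∀ i, i < n → ∀ u, A (c i) u ≠ 0 → u = c i ∨ u = c (i + 1) ∨ u = c (i - 1))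

/-- Test vector supported on the chain (coefficient 1) and on two extra vertices. -/
noncomputable def chainVec (c : ℕ → ι) (n : ℕ) (v w : ι) (cv cw : ℚ) : ι → ℚ :=
  fun u => if u = v then cv else if u = w then cw
    else if ∃ i, i ≤ n ∧ u = c i then 1 else 0

lemma chainVec_v (c : ℕ → ι) (n : ℕ) (v w : ι) (cv cw : ℚ) :
    chainVec c n v w cv cw v = cv := by simp [chainVec]

lemma chainVec_w (c : ℕ → ι) (n : ℕ) {v w : ι} (cv cw : ℚ) (h : w ≠ v) :
    chainVec c n v w cv cw w = cw := by simp [chainVec, h]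

lemma chainVec_c (c : ℕ → ι) (n : ℕ) {v w : ι} (cv cw : ℚ) {k : ℕ} (hk : k ≤ n)
    (h1 : c k ≠ v) (h2 : c k ≠ w) : chainVec c n v w cv cw (c k) = 1 := by
  simp only [chainVec, if_neg h1, if_neg h2]
  exact if_pos ⟨k, hk, rfl⟩

lemma chainVec_out (c : ℕ → ι) (n : ℕ) {v w u : ι} (cv cw : ℚ) (h1 : u ≠ v)
    (h2 : u ≠ w) (h3 : ∀ i, i ≤ n → u ≠ c i) : chainVec c n v w cv cw u = 0 := by
  simp only [chainVec, if_neg h1, if_neg h2]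
  exact if_neg (by rintro ⟨i, hi, rfl⟩; exact h3 i hi rfl)

lemma chainVec_nonneg (c : ℕ → ι) (n : ℕ) (v w : ι) {cv cw : ℚ} (h1 : 0 ≤ cv)
    (h2 : 0 ≤ cw) (u : ι) : 0 ≤ chainVec c n v w cv cw u := by
  unfold chainVec; split_ifs <;> norm_num <;> assumption

lemma chainVec_cases (c : ℕ → ι) (n : ℕ) {v w u : ι} (cv cw : ℚ)
    (h : chainVec c n v w cv cw u ≠ 0) :
    u = v ∨ u = w ∨ ∃ i, i ≤ n ∧ u = c i := by
  by_contra hc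
  push_neg at hc
  exact h (chainVec_out c n cv cw hc.1 hc.2.1 hc.2.2)

/-- The basic contradiction lemma: no nonnegative nonzero vector has all rows
of the (symmetrizable positive definite) Cartan matrix nonpositive. -/
lemma noNull (A : ι → ι → ℤ) (d : ι → ℚ) (hd : ∀ i, 0 < d i)
    (hQ : ∀ x : ι → ℚ, x ≠ 0 → 0 < ∑ i, ∑ j, d i * A i j * x i * x j)
    (x : ι → ℚ) (hx : x ≠ 0) (hpos : ∀ i, 0 ≤ x i)
    (hrow : ∀ i, 0 < x i → ∑ j, (A i j : ℚ) * x j ≤ 0) : False := by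
  have h1 : ∀ i : ι, ∑ j, d i * (A i j : ℚ) * x i * x j
      = d i * x i * ∑ j, (A i j : ℚ) * x j := by
    intro i; rw [Finset.mul_sum]; exact Finset.sum_congr rfl fun j _ => by ring
  have h2 : ∑ i, ∑ j, d i * (A i j : ℚ) * x i * x j ≤ 0 := by
    rw [Finset.sum_congr rfl fun i _ => h1 i]
    refine Finset.sum_nonpos fun i _ => ?_
    rcases eq_or_lt_of_le (hpos i) with h | h
    · rw [← h]; ring_nf; simp
    · exact mul_nonpos_of_nonneg_of_nonpos (le_of_lt (mul_pos (hd i) h)) (hrow i h)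
  exact absurd (hQ x hx) (not_lt.mpr h2)

lemma row_eval (A : ι → ι → ℤ) (x : ι → ℚ) (i : ι) (s : Finset ι)
    (h : ∀ j, j ∉ s → (A i j : ℚ) * x j = 0) :
    ∑ j, (A i j : ℚ) * x j = ∑ j ∈ s, (A i j : ℚ) * x j :=
  (Finset.sum_subset s.subset_univ fun j _ hj => h j hj).symm

lemma sum3 {M : Type*} [AddCommMonoid M] [DecidableEq ι] (f : ι → M) {a b e : ι}
    (h1 : a ≠ b) (h2 : a ≠ e) (h3 : b ≠ e) :
    ∑ j ∈ ({a, b, e} : Finset ι), f j = f a + f b + f e := by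
  rw [Finset.sum_insert (by simp [h1, h2]), Finset.sum_pair h3, add_assoc]

lemma sum4 {M : Type*} [AddCommMonoid M] [DecidableEq ι] (f : ι → M) {a b e g : ι}
    (h1 : a ≠ b) (h2 : a ≠ e) (h3 : a ≠ g) (h4 : b ≠ e) (h5 : b ≠ g) (h6 : e ≠ g) :
    ∑ j ∈ ({a, b, e, g} : Finset ι), f j = f a + f b + f e + f g := by
  rw [Finset.sum_insert (by simp [h1, h2, h3]), sum3 f h4 h5 h6]; abel

lemma chain_nonadj (A : ι → ι → ℤ) (α : ι)
    (hzero : ∀ i j, A i j = 0 ↔ A j i = 0)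
    (n : ℕ) (c : ℕ → ι) (hc : ChainP A α n c) {a b : ℕ} (hb : b ≤ n)
    (hab : a + 2 ≤ b) : A (c a) (c b) = 0 ∧ A (c b) (c a) = 0 := by
  obtain ⟨h0, hinj, hedge, hnb⟩ := hc
  have h1 : A (c a) (c b) = 0 := by
    by_contra h
    rcases hnb a (by omega) _ h with h' | h' | h'
    · have := hinj b a hb (by omega) h'; omega
    · have := hinj b (a + 1) hb (by omega) h'; omega
    · have := hinj b (a - 1) hb (by omega) h'; omega
  exact ⟨h1, (hzero _ _).mp h1⟩

lemma chain_no_outside (A : ι → ι → ℤ) (α : ι)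
    (hzero : ∀ i j, A i j = 0 ↔ A j i = 0)
    (n : ℕ) (c : ℕ → ι) (hc : ChainP A α n c) {k : ℕ} (hk : k < n) {u : ι}
    (hu : ∀ i, i ≤ n → u ≠ c i) : A (c k) u = 0 ∧ A u (c k) = 0 := by
  obtain ⟨h0, hinj, hedge, hnb⟩ := hc
  have h1 : A (c k) u = 0 := by
    by_contra h
    rcases hnb k hk _ h with h' | h' | h'
    · exact hu k (by omega) h'
    · exact hu (k + 1) (by omega) h'
    · exact hu (k - 1) (by omega) h'
  exact ⟨h1, (hzero _ _).mp h1⟩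

/-- Interior rows of the chain have nonpositive (in fact zero) pairing against any
vector which is `1` on the chain. -/
lemma row_chain_interior [DecidableEq ι] (A : ι → ι → ℤ) (α : ι)
    (hdiag : ∀ i, A i i = 2)
    (n : ℕ) (c : ℕ → ι) (hc : ChainP A α n c)
    (x : ι → ℚ) (hxc : ∀ k, k ≤ n → x (c k) = 1)
    {k : ℕ} (hk : k < n) :
    ∑ j, (A (c k) j : ℚ) * x j ≤ 0 := by
  obtain ⟨h0, hinj, hedge, hnb⟩ := hc
  rcases Nat.eq_zero_or_pos k with rfl | hkpos
  · have h01 : c 0 ≠ c 1 := fun h => by have := hinj 0 1 (by omega) (by omega) h; omega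
    rw [row_eval A x (c 0) {c 0, c 1} ?_, Finset.sum_pair h01]
    · rw [hxc 0 (by omega), hxc 1 (by omega), hdiag, (hedge 0 hk).1]
      norm_num
    · intro j hj
      have : A (c 0) j = 0 := by
        by_contra h
        rcases hnb 0 hk _ h with h' | h' | h' <;> subst h' <;> simp at hj
      rw [this]; norm_num
  · have e1 : k - 1 + 1 = k := by omega
    have d1 : c (k - 1) ≠ c k := fun h => by
      have := hinj (k - 1) k (by omega) (by omega) h; omega
    have d2 : c (k - 1) ≠ c (k + 1) := fun h => by
      have := hinj (k - 1) (k + 1) (by omega) (by omega) h; omega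
    have d3 : c k ≠ c (k + 1) := fun h => by
      have := hinj k (k + 1) (by omega) (by omega) h; omega
    rw [row_eval A x (c k) {c (k - 1), c k, c (k + 1)} ?_, sum3 _ d1 d2 d3]
    · have v1 : A (c k) (c (k - 1)) = -1 := by
        have := (hedge (k - 1) (by omega)).2; rwa [e1] at this
      have v2 : A (c k) (c (k + 1)) = -1 := by
        have := (hedge k hk).1; rwa [if_neg (by omega)] at this
      rw [hxc (k - 1) (by omega), hxc k (by omega), hxc (k + 1) (by omega),
        hdiag, v1, v2]
      norm_num
    · intro j hj
      have : A (c k) j = 0 := by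
        by_contra h
        rcases hnb k hk _ h with h' | h' | h' <;> subst h' <;> simp at hj
      rw [this]; norm_num

/-- The forced values of the Cartan pairings between the end of the chain and an
outside neighbour. -/
lemma chain_edge [DecidableEq ι] (A : ι → ι → ℤ) (α : ι)
    (hdiag : ∀ i, A i i = 2)
    (hoff : ∀ i j, i ≠ j → A i j ≤ 0)
    (hzero : ∀ i j, A i j = 0 ↔ A j i = 0)
    (d : ι → ℚ) (hd : ∀ i, 0 < d i)
    (hQ : ∀ x : ι → ℚ, x ≠ 0 → 0 < ∑ i, ∑ j, d i * (A i j : ℚ) * x i * x j)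
    (heven : ∀ j, (2 : ℤ) ∣ A α j)
    (n : ℕ) (c : ℕ → ι) (hc : ChainP A α n c)
    (v : ι) (hv : ∀ i, i ≤ n → v ≠ c i) (hadj : A (c n) v ≠ 0) :
    A (c n) v = (if n = 0 then -2 else -1) ∧ A v (c n) = -1 := by
  have hvc : ∀ k, k ≤ n → c k ≠ v := fun k hk h => hv k hk h.symm
  have hne : c n ≠ v := hvc n le_rfl
  have hA1 : A (c n) v ≤ -1 := by have := hoff (c n) v hne; omega
  have hA2ne : A v (c n) ≠ 0 := fun h => hadj ((hzero v (c n)).mp h)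
  have hA2 : A v (c n) ≤ -1 := by have := hoff v (c n) (hv n le_rfl); omega
  have hxc : ∀ (cv : ℚ) (k : ℕ), k ≤ n → chainVec c n v v cv cv (c k) = 1 :=
    fun cv k hk => chainVec_c c n cv cv hk (hvc k hk) (hvc k hk)
  have hxne : ∀ cv : ℚ, chainVec c n v v cv cv ≠ 0 := by
    intro cv h
    have h0 := congrFun h (c 0)
    rw [hxc cv 0 (Nat.zero_le n)] at h0
    simp at h0
  have hrow_v : ∀ cv : ℚ, ∑ j, (A v j : ℚ) * chainVec c n v v cv cv j
      = (A v (c n) : ℚ) + 2 * cv := by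
    intro cv
    rw [row_eval A _ v {c n, v} ?_, Finset.sum_pair hne, hxc cv n le_rfl,
      chainVec_v, hdiag]
    · push_cast; ring
    · intro j hj
      simp only [Finset.mem_insert, Finset.mem_singleton, not_or] at hj
      by_cases hjc : ∃ i, i ≤ n ∧ j = c i
      · obtain ⟨m, hm, rfl⟩ := hjc
        have hmn : m < n := by
          rcases eq_or_lt_of_le hm with h' | h'
          · exact absurd (by rw [h']) hj.1
          · exact h'
        rw [(chain_no_outside A α hzero n c hc hmn hv).2]
        norm_num
      · push_neg at hjc
        rw [chainVec_out c n cv cv hj.2 hj.2 (fun i hi => hjc i hi)]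
        ring
  have hrow_n : ∀ cv : ℚ, 1 ≤ n → ∑ j, (A (c n) j : ℚ) * chainVec c n v v cv cv j
      = 1 + (A (c n) v : ℚ) * cv := by
    intro cv hn1
    have e1 : n - 1 + 1 = n := by omega
    have d1 : c (n - 1) ≠ c n := fun h => by
      have := hc.2.1 (n - 1) n (by omega) le_rfl h; omega
    have d2 : c (n - 1) ≠ v := hvc (n - 1) (by omega)
    rw [row_eval A _ (c n) {c (n - 1), c n, v} ?_, sum3 _ d1 d2 hne,
      hxc cv (n - 1) (by omega), hxc cv n le_rfl, chainVec_v, hdiag]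
    · have v1 : A (c n) (c (n - 1)) = -1 := by
        have := (hc.2.2.1 (n - 1) (by omega)).2; rwa [e1] at this
      rw [v1]; push_cast; ring
    · intro j hj
      simp only [Finset.mem_insert, Finset.mem_singleton, not_or] at hj
      by_cases hjc : ∃ i, i ≤ n ∧ j = c i
      · obtain ⟨m, hm, rfl⟩ := hjc
        have hm1 : m ≠ n := fun h => hj.2.1 (by rw [h])
        have hm2 : m ≠ n - 1 := fun h => hj.1 (by rw [h])
        have : m + 2 ≤ n := by omega
        rw [(chain_nonadj A α hzero n c hc le_rfl this).2]
        norm_num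
      · push_neg at hjc
        rw [chainVec_out c n cv cv hj.2.2 hj.2.2 (fun i hi => hjc i hi)]
        ring
  have hrow_0 : ∀ cv : ℚ, n = 0 → ∑ j, (A (c n) j : ℚ) * chainVec c n v v cv cv j
      = 2 + (A (c n) v : ℚ) * cv := by
    intro cv hn0
    subst hn0
    rw [row_eval A _ (c 0) {c 0, v} ?_, Finset.sum_pair hne, hxc cv 0 le_rfl,
      chainVec_v, hdiag]
    · push_cast; ring
    · intro j hj
      simp only [Finset.mem_insert, Finset.mem_singleton, not_or] at hj
      rw [chainVec_out c 0 cv cv hj.2 hj.2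
        (fun i hi hh => hj.1 (by rw [show i = 0 by omega] at hh; exact hh))]
      ring
  have part1 : A (c n) v = if n = 0 then -2 else -1 := by
    rcases Nat.eq_zero_or_pos n with hn0 | hn1
    · rw [if_pos hn0]
      have heq : c n = α := by rw [hn0, hc.1]
      obtain ⟨t, ht⟩ := heven v
      rw [heq]
      rw [heq] at hA1
      suffices hge : -3 ≤ A α v by omega
      by_contra hlt
      push_neg at hlt
      refine noNull A d hd hQ (chainVec c n v v (1/2) (1/2)) (hxne _)
        (chainVec_nonneg c n v v (by norm_num) (by norm_num)) ?_
      intro i hi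
      rcases chainVec_cases c n (1/2 : ℚ) (1/2 : ℚ) (ne_of_gt hi) with h | h | ⟨k, hk, h⟩
      · rw [h, hrow_v]
        have hcast : (A v (c n) : ℚ) ≤ -1 := by exact_mod_cast hA2
        linarith
      · rw [h, hrow_v]
        have hcast : (A v (c n) : ℚ) ≤ -1 := by exact_mod_cast hA2
        linarith
      · have hin : i = c n := by rw [h]; congr 1; omega
        subst hin
        rw [hrow_0 _ hn0]
        have hle : A (c n) v ≤ -4 := by rw [heq]; omega
        have hcast : (A (c n) v : ℚ) ≤ -4 := by exact_mod_cast hle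
        linarith
    · rw [if_neg (by omega)]
      suffices hge : -1 ≤ A (c n) v by omega
      by_contra hlt
      push_neg at hlt
      refine noNull A d hd hQ (chainVec c n v v (1/2) (1/2)) (hxne _)
        (chainVec_nonneg c n v v (by norm_num) (by norm_num)) ?_
      intro i hi
      rcases chainVec_cases c n (1/2 : ℚ) (1/2 : ℚ) (ne_of_gt hi) with h | h | ⟨k, hk, h⟩
      · rw [h, hrow_v]
        have hcast : (A v (c n) : ℚ) ≤ -1 := by exact_mod_cast hA2
        linarith
      · rw [h, hrow_v]
        have hcast : (A v (c n) : ℚ) ≤ -1 := by exact_mod_cast hA2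
        linarith
      · subst h
        rcases eq_or_lt_of_le hk with hkn | hkn
        · subst hkn
          rw [hrow_n _ hn1]
          have hle : A (c k) v ≤ -2 := by omega
          have hcast : (A (c k) v : ℚ) ≤ -2 := by exact_mod_cast hle
          linarith
        · exact row_chain_interior A α hdiag n c hc _ (hxc _) hkn
  have part2 : A v (c n) = -1 := by
    suffices hge : -1 ≤ A v (c n) by omega
    by_contra hlt
    push_neg at hlt
    refine noNull A d hd hQ (chainVec c n v v 1 1) (hxne _)
      (chainVec_nonneg c n v v (by norm_num) (by norm_num)) ?_
    intro i hi
    rcases chainVec_cases c n (1 : ℚ) (1 : ℚ) (ne_of_gt hi) with h | h | ⟨k, hk, h⟩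
    · rw [h, hrow_v]
      have hcast : (A v (c n) : ℚ) ≤ -2 := by exact_mod_cast (by omega : A v (c n) ≤ -2)
      linarith
    · rw [h, hrow_v]
      have hcast : (A v (c n) : ℚ) ≤ -2 := by exact_mod_cast (by omega : A v (c n) ≤ -2)
      linarith
    · subst h
      rcases eq_or_lt_of_le hk with hkn | hkn
      · subst hkn
        rcases Nat.eq_zero_or_pos k with h0 | hpos
        · rw [hrow_0 _ h0]
          have hval : A (c k) v = -2 := by rw [part1, if_pos h0]
          rw [hval]; norm_num
        · rw [hrow_n _ hpos]
          have hval : A (c k) v = -1 := by rw [part1, if_neg (by omega)]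
          rw [hval]; norm_num
      · exact row_chain_interior A α hdiag n c hc _ (hxc _) hkn
  exact ⟨part1, part2⟩

/-- The end of the chain has at most one neighbour outside the chain. -/
lemma chain_unique [DecidableEq ι] (A : ι → ι → ℤ) (α : ι)
    (hdiag : ∀ i, A i i = 2)
    (hoff : ∀ i j, i ≠ j → A i j ≤ 0)
    (hzero : ∀ i j, A i j = 0 ↔ A j i = 0)
    (d : ι → ℚ) (hd : ∀ i, 0 < d i)
    (hQ : ∀ x : ι → ℚ, x ≠ 0 → 0 < ∑ i, ∑ j, d i * (A i j : ℚ) * x i * x j)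
    (heven : ∀ j, (2 : ℤ) ∣ A α j)
    (n : ℕ) (c : ℕ → ι) (hc : ChainP A α n c)
    (v w : ι) (hv : ∀ i, i ≤ n → v ≠ c i) (hw : ∀ i, i ≤ n → w ≠ c i)
    (hadjv : A (c n) v ≠ 0) (hadjw : A (c n) w ≠ 0) : v = w := by
  by_contra hvw
  obtain ⟨hev1, hev2⟩ := chain_edge A α hdiag hoff hzero d hd hQ heven n c hc v hv hadjv
  obtain ⟨hew1, hew2⟩ := chain_edge A α hdiag hoff hzero d hd hQ heven n c hc w hw hadjw
  have hvc : ∀ k, k ≤ n → c k ≠ v := fun k hk h => hv k hk h.symm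
  have hwc : ∀ k, k ≤ n → c k ≠ w := fun k hk h => hw k hk h.symm
  have hnev : c n ≠ v := hvc n le_rfl
  have hnew : c n ≠ w := hwc n le_rfl
  set x := chainVec c n v w (1/2) (1/2) with hx
  have hxc : ∀ k : ℕ, k ≤ n → x (c k) = 1 :=
    fun k hk => chainVec_c c n _ _ hk (hvc k hk) (hwc k hk)
  have hxv : x v = 1/2 := chainVec_v c n v w _ _
  have hxw : x w = 1/2 := chainVec_w c n _ _ (Ne.symm hvw)
  have hAvw : A v w ≤ 0 := hoff v w hvw
  have hAwv : A w v ≤ 0 := hoff w v (Ne.symm hvw)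
  have hout : ∀ j, j ≠ v → j ≠ w → (∀ i, i ≤ n → j ≠ c i) → x j = 0 :=
    fun j h1 h2 h3 => chainVec_out c n _ _ h1 h2 h3
  refine noNull A d hd hQ x ?_ (chainVec_nonneg c n v w (by norm_num) (by norm_num)) ?_
  · intro h
    have h0 := congrFun h (c 0)
    rw [hxc 0 (Nat.zero_le n)] at h0
    simp at h0
  intro i hi
  rcases chainVec_cases c n (1/2 : ℚ) (1/2 : ℚ) (ne_of_gt hi) with h | h | ⟨k, hk, h⟩
  · -- row at v
    subst h
    have hd1 : c n ≠ i := hnev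
    have hd2 : c n ≠ w := hnew
    have hd3 : i ≠ w := hvw
    rw [row_eval A x i {c n, i, w} ?_, sum3 _ hd1 hd2 hd3, hxc n le_rfl, hxv, hxw, hdiag, hev2]
    · have hcast : (A i w : ℚ) ≤ 0 := by exact_mod_cast hAvw
      push_cast
      linarith
    · intro j hj
      simp only [Finset.mem_insert, Finset.mem_singleton, not_or] at hj
      by_cases hjc : ∃ m, m ≤ n ∧ j = c m
      · obtain ⟨m, hm, rfl⟩ := hjc
        have hmn : m < n := by
          rcases eq_or_lt_of_le hm with h' | h'
          · exact absurd (by rw [h']) hj.1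
          · exact h'
        rw [(chain_no_outside A α hzero n c hc hmn hv).2]
        norm_num
      · push_neg at hjc
        rw [hout j hj.2.1 hj.2.2 hjc]
        ring
  · -- row at w
    subst h
    have hd1 : c n ≠ v := hnev
    have hd2 : c n ≠ i := hnew
    have hd3 : v ≠ i := hvw
    rw [row_eval A x i {c n, v, i} ?_, sum3 _ hd1 hd2 hd3, hxc n le_rfl, hxv, hxw, hdiag, hew2]
    · have hcast : (A i v : ℚ) ≤ 0 := by exact_mod_cast hAwv
      push_cast
      linarith
    · intro j hj
      simp only [Finset.mem_insert, Finset.mem_singleton, not_or] at hj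
      by_cases hjc : ∃ m, m ≤ n ∧ j = c m
      · obtain ⟨m, hm, rfl⟩ := hjc
        have hmn : m < n := by
          rcases eq_or_lt_of_le hm with h' | h'
          · exact absurd (by rw [h']) hj.1
          · exact h'
        rw [(chain_no_outside A α hzero n c hc hmn hw).2]
        norm_num
      · push_neg at hjc
        rw [hout j hj.2.1 hj.2.2 hjc]
        ring
  · -- row at c k
    subst h
    rcases eq_or_lt_of_le hk with hkn | hkn
    · subst hkn
      rcases Nat.eq_zero_or_pos k with h0 | hpos
      · -- n = 0 row
        have hd1 : c k ≠ v := hnev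
        have hd2 : c k ≠ w := hnew
        rw [row_eval A x (c k) {c k, v, w} ?_, sum3 _ hd1 hd2 hvw, hxc k le_rfl, hxv, hxw,
          hdiag, hev1, hew1, if_pos h0]
        · norm_num
        · intro j hj
          simp only [Finset.mem_insert, Finset.mem_singleton, not_or] at hj
          rw [hout j hj.2.1 hj.2.2
            (fun i' hi' hh => hj.1 (by rw [show i' = k by omega] at hh; exact hh))]
          ring
      · -- n ≥ 1 row
        have e1 : k - 1 + 1 = k := by omega
        have d1 : c (k - 1) ≠ c k := fun h => by
          have := hc.2.1 (k - 1) k (by omega) le_rfl h; omega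
        have d2 : c (k - 1) ≠ v := hvc (k - 1) (by omega)
        have d3 : c (k - 1) ≠ w := hwc (k - 1) (by omega)
        rw [row_eval A x (c k) {c (k - 1), c k, v, w} ?_, sum4 _ d1 d2 d3 hnev hnew hvw,
          hxc (k - 1) (by omega), hxc k le_rfl, hxv, hxw, hdiag, hev1, hew1,
          if_neg (by omega)]
        · have v1 : A (c k) (c (k - 1)) = -1 := by
            have := (hc.2.2.1 (k - 1) (by omega)).2; rwa [e1] at this
          rw [v1]; norm_num
        · intro j hj
          simp only [Finset.mem_insert, Finset.mem_singleton, not_or] at hj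
          by_cases hjc : ∃ m, m ≤ k ∧ j = c m
          · obtain ⟨m, hm, rfl⟩ := hjc
            have hm1 : m ≠ k := fun h => hj.2.1 (by rw [h])
            have hm2 : m ≠ k - 1 := fun h => hj.1 (by rw [h])
            have : m + 2 ≤ k := by omega
            rw [(chain_nonadj A α hzero k c hc le_rfl this).2]
            norm_num
          · push_neg at hjc
            rw [hout j hj.2.2.1 hj.2.2.2 hjc]
            ring
    · exact row_chain_interior A α hdiag n c hc x hxc hkn

/-- Extending a chain by an outside neighbour of its end. -/
lemma chain_extend [DecidableEq ι] (A : ι → ι → ℤ) (α : ι)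
    (hdiag : ∀ i, A i i = 2)
    (hoff : ∀ i j, i ≠ j → A i j ≤ 0)
    (hzero : ∀ i j, A i j = 0 ↔ A j i = 0)
    (d : ι → ℚ) (hd : ∀ i, 0 < d i)
    (hQ : ∀ x : ι → ℚ, x ≠ 0 → 0 < ∑ i, ∑ j, d i * (A i j : ℚ) * x i * x j)
    (heven : ∀ j, (2 : ℤ) ∣ A α j)
    (n : ℕ) (c : ℕ → ι) (hc : ChainP A α n c)
    (v : ι) (hv : ∀ i, i ≤ n → v ≠ c i) (hadj : A (c n) v ≠ 0) :
    ChainP A α (n + 1) (fun i => if i ≤ n then c i else v) := by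
  obtain ⟨he1, he2⟩ := chain_edge A α hdiag hoff hzero d hd hQ heven n c hc v hv hadj
  obtain ⟨h0, hinj, hedge, hnb⟩ := hc
  have hc' : ChainP A α n c := ⟨h0, hinj, hedge, hnb⟩
  refine ⟨?_, ?_, ?_, ?_⟩
  · simp only [Nat.zero_le, if_pos]; exact h0
  · intro i j hi hj hij
    simp only at hij
    by_cases hin : i ≤ n <;> by_cases hjn : j ≤ n
    · rw [if_pos hin, if_pos hjn] at hij; exact hinj i j hin hjn hij
    · rw [if_pos hin, if_neg hjn] at hij; exact absurd hij.symm (hv i hin)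
    · rw [if_neg hin, if_pos hjn] at hij; exact absurd hij (hv j hjn)
    · omega
  · intro i hi
    rcases Nat.lt_or_ge i n with h | h
    · simp only [if_pos (Nat.le_of_lt h), if_pos (Nat.succ_le_of_lt h)]
      exact hedge i h
    · have hin : i = n := by omega
      subst hin
      simp only [le_refl, if_pos, if_neg (by omega : ¬ i + 1 ≤ i)]
      exact ⟨he1, he2⟩
  · intro i hi u hu
    rcases Nat.lt_or_ge i n with h | h
    · simp only [if_pos (Nat.le_of_lt h)] at hu
      simp only [if_pos (Nat.le_of_lt h), if_pos (Nat.succ_le_of_lt h),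
        if_pos (by omega : i - 1 ≤ n)]
      exact hnb i h u hu
    · have hin : i = n := by omega
      subst hin
      simp only [le_refl, if_pos] at hu
      simp only [le_refl, if_pos, if_neg (by omega : ¬ i + 1 ≤ i),
        if_pos (by omega : i - 1 ≤ i)]
      by_cases huc : ∃ m, m ≤ i ∧ u = c m
      · obtain ⟨m, hm, rfl⟩ := huc
        rcases eq_or_lt_of_le hm with h' | h'
        · left; rw [h']
        · rcases Nat.lt_or_ge m (i - 1) with h'' | h''
          · exfalso
            exact hu (chain_nonadj A α hzero i c hc' le_rfl (by omega)).2
          · right; right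
            have : m = i - 1 := by omega
            rw [this]
      · push_neg at huc
        right; left
        exact (chain_unique A α hdiag hoff hzero d hd hQ heven i c hc' v u hv huc hadj hu).symm

end Aux

/-- Let `(X, Φ, Δ; Y, Φ^∨, Δ^∨)` be the root datum of a split
reductive group whose root system is irreducible of rank `≥ 2`; its Cartan matrix
`A i j = ⟨α_i, α_j^∨⟩` (indexed by the simple roots `ι = Δ`) has `2`'s on the
diagonal, non-positive off-diagonal entries, symmetric vanishing, is irreducible
(connected), and is of finite type (symmetrizable positive definite).  The simple
roots pair with the cocharacter lattice `Y` through `pair`, with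
`pair i (coroot j) = A i j`.  If a simple root `α` satisfies `⟨α, y⟩ ∈ 2ℤ` for all
`y ∈ Y`, then the root system is of type `C_r` and `α` is the (unique) long simple
root: there is a bijection `ι ≃ Fin r` identifying `A` with the `C_r` Cartan matrix
and sending `α` to the long simple root `α_r`. -/
theorem statement7 (ι : Type*) [Fintype ι] [DecidableEq ι]
    (hcard : 2 ≤ Fintype.card ι)
    (A : ι → ι → ℤ)
    (hdiag : ∀ i, A i i = 2)
    (hoff : ∀ i j, i ≠ j → A i j ≤ 0)
    (hzero : ∀ i j, A i j = 0 ↔ A j i = 0)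
    (hconn : ∀ S : Set ι, S.Nonempty → Sᶜ.Nonempty →
      ∃ i ∈ S, ∃ j ∈ Sᶜ, A i j ≠ 0)
    (hfin : ∃ d : ι → ℚ, (∀ i, 0 < d i) ∧ (∀ i j, d i * (A i j : ℚ) = d j * A j i) ∧
      ∀ x : ι → ℚ, x ≠ 0 → 0 < ∑ i, ∑ j, d i * A i j * x i * x j)
    (Y : Type*) [AddCommGroup Y] (pair : ι → Y →+ ℤ) (coroot : ι → Y)
    (hpair : ∀ i j, pair i (coroot j) = A i j)
    (α : ι) (heven : ∀ y : Y, 2 ∣ pair α y) :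
    ∃ (r : ℕ) (eq : ι ≃ Fin r), 2 ≤ r ∧
      (∀ i j, A i j = cartanMatrixC r (eq i) (eq j)) ∧
      ((eq α : ℕ) = r - 1) := by
  classical
  obtain ⟨d, hd, hdsym, hQ⟩ := hfin
  have hevenA : ∀ j, (2 : ℤ) ∣ A α j := fun j => by
    have h := heven (coroot j)
    rwa [hpair] at h
  set N := Fintype.card ι with hN
  -- any chain has length < N
  have hlen : ∀ (n : ℕ) (c : ℕ → ι), ChainP A α n c → n < N := by
    intro n c hc
    have hinj : Function.Injective (fun k : Fin (n + 1) => c k) := by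
      intro a b hab
      exact Fin.ext (hc.2.1 a b (Nat.lt_succ_iff.mp a.isLt) (Nat.lt_succ_iff.mp b.isLt) hab)
    have hle := Fintype.card_le_of_injective _ hinj
    simp only [Fintype.card_fin] at hle
    omega
  -- the trivial chain
  have hP0 : ∃ c, ChainP A α 0 c := by
    refine ⟨fun _ => α, rfl, ?_, ?_, ?_⟩
    · intro i j hi hj _; omega
    · intro i hi; omega
    · intro i hi; omega
  obtain ⟨n, hPn, hmaxle⟩ :
      ∃ n, (∃ c, ChainP A α n c) ∧ ∀ m, n < m → m ≤ N → ¬∃ c, ChainP A α m c :=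
    ⟨Nat.findGreatest (fun m => ∃ c, ChainP A α m c) N,
      Nat.findGreatest_spec (P := fun m => ∃ c, ChainP A α m c) (Nat.zero_le N) hP0,
      fun m h1 h2 => Nat.findGreatest_is_greatest
        (P := fun m => ∃ c, ChainP A α m c) h1 h2⟩
  have hmax : ∀ m, (∃ c, ChainP A α m c) → m ≤ n := by
    intro m hm
    by_contra hlt
    push_neg at hlt
    obtain ⟨cm, hcm⟩ := hm
    exact hmaxle m hlt (le_of_lt (hlen m cm hcm)) ⟨cm, hcm⟩
  obtain ⟨c, hc⟩ := hPn
  -- no outside neighbour of the end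
  have hnoout : ∀ v, (∀ i, i ≤ n → v ≠ c i) → A (c n) v = 0 := by
    intro v hv
    by_contra hadj
    have hext := chain_extend A α hdiag hoff hzero d hd hQ hevenA n c hc v hv hadj
    have := hmax (n + 1) ⟨_, hext⟩
    omega
  -- the chain covers everything
  have hsurj : ∀ u, ∃ m, m ≤ n ∧ u = c m := by
    by_contra hs
    push_neg at hs
    obtain ⟨u, hu⟩ := hs
    obtain ⟨p, hp, q, hq, hpq⟩ := hconn {w | ∃ m, m ≤ n ∧ w = c m}
      ⟨c 0, 0, Nat.zero_le n, rfl⟩ ⟨u, fun ⟨m, hm, hh⟩ => hu m hm hh⟩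
    obtain ⟨m, hm, rfl⟩ := hp
    have hqc : ∀ i, i ≤ n → q ≠ c i := fun i hi hh => hq ⟨i, hi, hh⟩
    rcases eq_or_lt_of_le hm with h' | h'
    · subst h'
      exact hpq (hnoout q hqc)
    · exact hpq (chain_no_outside A α hzero n c hc h' hqc).1
  have hNle : N ≤ n + 1 := by
    have hsurj' : Function.Surjective (fun k : Fin (n + 1) => c k) := by
      intro u
      obtain ⟨m, hm, rfl⟩ := hsurj u
      exact ⟨⟨m, by omega⟩, rfl⟩
    have := Fintype.card_le_of_surjective _ hsurj'
    simpa using this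
  have hn1 : 1 ≤ n := by omega
  -- the equivalence
  set r := n + 1 with hr
  have hinj' : Function.Injective (fun k : Fin r => c (n - (k : ℕ))) := by
    intro a b hab
    have h1 := hc.2.1 (n - (a : ℕ)) (n - (b : ℕ)) (by omega) (by omega) hab
    have ha := Nat.lt_succ_iff.mp a.isLt
    have hb := Nat.lt_succ_iff.mp b.isLt
    exact Fin.ext (by omega)
  have hsurj'' : Function.Surjective (fun k : Fin r => c (n - (k : ℕ))) := by
    intro u
    obtain ⟨m, hm, rfl⟩ := hsurj u
    exact ⟨⟨n - m, by omega⟩, by simp only; congr 1; omega⟩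
  set E := Equiv.ofBijective _ ⟨hinj', hsurj''⟩ with hE
  refine ⟨r, E.symm, by omega, ?_, ?_⟩
  · -- Cartan matrix identification
    have hM : ∀ p q : Fin r, A (c (n - (p : ℕ))) (c (n - (q : ℕ))) = cartanMatrixC r p q := by
      intro p q
      have hp := Nat.lt_succ_iff.mp p.isLt
      have hq := Nat.lt_succ_iff.mp q.isLt
      unfold cartanMatrixC
      split_ifs with h1 h2 h3
      · rw [h1, hdiag]
      · -- (p : ℕ) = q + 1 and p = r - 1, i.e. n - p = 0
        obtain ⟨h21, h22⟩ := h2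
        have e1 : n - (q : ℕ) = (n - (p : ℕ)) + 1 := by omega
        have e2 : n - (p : ℕ) = 0 := by omega
        rw [e1]
        have := (hc.2.2.1 (n - (p : ℕ)) (by omega)).1
        rwa [if_pos e2] at this
      · rcases h3 with h3 | h3
        · have e1 : n - (q : ℕ) = (n - (p : ℕ)) + 1 := by omega
          have e2 : ¬ (n - (p : ℕ) = 0) := by
            intro h
            exact h2 ⟨h3, by omega⟩
          rw [e1]
          have := (hc.2.2.1 (n - (p : ℕ)) (by omega)).1
          rwa [if_neg e2] at this
        · have e1 : n - (p : ℕ) = (n - (q : ℕ)) + 1 := by omega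
          rw [e1]
          exact (hc.2.2.1 (n - (q : ℕ)) (by omega)).2
      · -- far apart
        have hne : (p : ℕ) ≠ (q : ℕ) := fun h => h1 (Fin.ext h)
        rcases Nat.lt_or_ge (p : ℕ) (q : ℕ) with h | h
        · exact (chain_nonadj A α hzero n c hc (by omega)
            (by omega : (n - (q : ℕ)) + 2 ≤ n - (p : ℕ))).2
        · exact (chain_nonadj A α hzero n c hc (by omega)
            (by omega : (n - (p : ℕ)) + 2 ≤ n - (q : ℕ))).1
    intro i j
    have hi : c (n - ((E.symm i : Fin r) : ℕ)) = i := E.apply_symm_apply i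
    have hj : c (n - ((E.symm j : Fin r) : ℕ)) = j := E.apply_symm_apply j
    have h := hM (E.symm i) (E.symm j)
    rwa [hi, hj] at h
  · -- α goes to the long root
    have hα : E ⟨n, by omega⟩ = α := by
      show c (n - n) = α
      rw [Nat.sub_self]
      exact hc.1
    rw [← hα, Equiv.symm_apply_apply]
    simp [hr]
end

section
/- Let $n = 2m+1$ be odd and $2r = (2a+1)n + (2b - n)$ with $(n+1)/2 \le b < n$ (so $r = an + b$, case (iii) of Theorem 4.1). Then the symplectic collapse of the partition $(n^{2a+1}, 2b-n)$ of $2r$ equals $(n^{2a}, n-1, 2(b-m))$. -/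
/-- The sum of the `k` largest parts of a partition given as a multiset. -/
def topSum (s : Multiset ℕ) (k : ℕ) : ℕ :=
  s.sum - ((s.sort (· ≤ ·)).take (s.card - k)).sum

/-- Dominance order on partitions (of the same number): `Dominates μ ν` means that
for every `k`, the sum of the `k` largest parts of `ν` is at most that of `μ`. -/
def Dominates (mu nu : Multiset ℕ) : Prop := ∀ k, topSum nu k ≤ topSum mu k

/-- A partition is symplectic if every odd part occurs with even multiplicity. -/
def IsSymplecticPartition (s : Multiset ℕ) : Prop :=
  ∀ p, Odd p → Even (s.count p)

/-- `μ` is the symplectic collapse of `λ`: `μ` is the largest symplectic partition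
(of the same number) dominated by `λ` in the dominance order. -/
def IsSymplecticCollapse (lam mu : Multiset ℕ) : Prop :=
  mu.sum = lam.sum ∧ IsSymplecticPartition mu ∧ Dominates lam mu ∧
    ∀ nu : Multiset ℕ, nu.sum = lam.sum → IsSymplecticPartition nu →
      Dominates lam nu → Dominates mu nu

lemma sum_sort (s : Multiset ℕ) : (s.sort (· ≤ ·)).sum = s.sum := by
  rw [← Multiset.sum_coe, Multiset.sort_eq]

lemma topSum_eq_drop (s : Multiset ℕ) (k : ℕ) :
    topSum s k = ((s.sort (· ≤ ·)).drop (Multiset.card s - k)).sum := by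
  have h2 : ((s.sort (· ≤ ·)).take (Multiset.card s - k)).sum
      + ((s.sort (· ≤ ·)).drop (Multiset.card s - k)).sum = s.sum := by
    rw [← List.sum_append, List.take_append_drop, sum_sort]
  unfold topSum
  omega

lemma sort_eq_of_sorted {s : Multiset ℕ} {l : List ℕ} (h : (l : Multiset ℕ) = s)
    (hl : l.Pairwise (· ≤ ·)) : s.sort (· ≤ ·) = l := by
  have hp : (s.sort (· ≤ ·)).Perm l := by
    rw [← Multiset.coe_eq_coe, Multiset.sort_eq, ← h]
  exact List.Perm.eq_of_pairwise' (Multiset.pairwise_sort s _) hl hp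

lemma topSum_of_card_le {s : Multiset ℕ} {k : ℕ} (h : Multiset.card s ≤ k) :
    topSum s k = s.sum := by
  rw [topSum_eq_drop, Nat.sub_eq_zero_of_le h, List.drop_zero, sum_sort]

lemma mem_le_topSum_one (s : Multiset ℕ) (x : ℕ) (hx : x ∈ s) : x ≤ topSum s 1 := by
  rw [topSum_eq_drop]
  set l := s.sort (· ≤ ·) with hldef
  have hmem : x ∈ l := by rwa [← Multiset.mem_coe, Multiset.sort_eq]
  have hc : Multiset.card s = l.length := (Multiset.length_sort _).symm
  rw [hc]
  have hlen : 0 < l.length := List.length_pos_iff.mpr (List.ne_nil_of_mem hmem)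
  obtain ⟨i, hget⟩ := List.mem_iff_get.mp hmem
  have hdrop : l.drop (l.length - 1) = [l.get ⟨l.length - 1, by omega⟩] := by
    rw [List.drop_eq_getElem_cons (by omega)]
    have h1 : l.length - 1 + 1 = l.length := by omega
    rw [h1, List.drop_length]
    simp [List.get_eq_getElem]
  rw [hdrop]
  simp only [List.sum_cons, List.sum_nil, add_zero]
  rw [← hget]
  have hs : l.Pairwise (· ≤ ·) := Multiset.pairwise_sort s _
  have hpg := List.pairwise_iff_get.mp hs
  rcases Nat.lt_or_ge i.1 (l.length - 1) with h | h
  · exact hpg i ⟨l.length - 1, by omega⟩ (by exact h)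
  · have hi2 := i.2
    have h2 : i = ⟨l.length - 1, by omega⟩ := Fin.ext (by simp; omega)
    rw [h2]

lemma all_eq_of_sum_eq {l : List ℕ} {n : ℕ} (h : ∀ x ∈ l, x ≤ n)
    (hs : l.sum = l.length * n) : ∀ x ∈ l, x = n := by
  induction l with
  | nil => simp
  | cons a t ih =>
    have hts : t.sum ≤ t.length * n := by
      simpa [smul_eq_mul] using List.sum_le_card_nsmul t n (fun x hx => h x (List.mem_cons_of_mem _ hx))
    have ha : a ≤ n := h a List.mem_cons_self
    simp only [List.sum_cons, List.length_cons] at hs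
    obtain ⟨P, hP⟩ : ∃ P, t.length * n = P := ⟨_, rfl⟩
    rw [hP] at hts
    have hs' : a + t.sum = P + n := by rw [hs, add_mul, one_mul, hP]
    have han : a = n ∧ t.sum = P := by omega
    intro x hx
    rcases List.mem_cons.mp hx with rfl | hx
    · exact han.1
    · exact ih (fun y hy => h y (List.mem_cons_of_mem _ hy)) (by rw [han.2, hP]) x hx

/-- Let `n = 2m+1` be odd, `r = an + b` with
`(n+1)/2 = m+1 ≤ b < n`, so `2r = (2a+1)n + (2b-n)`.  Then the symplectic collapse
of the partition `(n^{2a+1}, 2b-n)` of `2r` is `(n^{2a}, n-1, 2(b-m))`. -/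
theorem statement11 (r a b m : ℕ) (hb1 : m + 1 ≤ b) (hb2 : b < 2 * m + 1)
    (hr : r = a * (2 * m + 1) + b) :
    IsSymplecticCollapse
      (Multiset.replicate (2 * a + 1) (2 * m + 1) + {2 * b - (2 * m + 1)})
      (Multiset.replicate (2 * a) (2 * m + 1) + {2 * m, 2 * (b - m)}) := by
  have hm1 : 1 ≤ m := by omega
  set lam : Multiset ℕ := Multiset.replicate (2 * a + 1) (2 * m + 1) + {2 * b - (2 * m + 1)} with hlam
  set mu : Multiset ℕ := Multiset.replicate (2 * a) (2 * m + 1) + {2 * m, 2 * (b - m)} with hmu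
  -- sorted lists
  have hsortL : lam.sort (· ≤ ·) = (2 * b - (2 * m + 1)) :: List.replicate (2 * a + 1) (2 * m + 1) := by
    apply sort_eq_of_sorted
    · rw [hlam, ← Multiset.cons_coe, Multiset.coe_replicate, ← Multiset.singleton_add, add_comm]
    · refine List.pairwise_cons.mpr ⟨?_, List.pairwise_replicate.mpr (Or.inr le_rfl)⟩
      intro y hy
      rw [List.eq_of_mem_replicate hy]
      omega
  have hsortM : mu.sort (· ≤ ·) = (2 * (b - m)) :: (2 * m) :: List.replicate (2 * a) (2 * m + 1) := by
    apply sort_eq_of_sorted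
    · rw [hmu, ← Multiset.cons_coe, ← Multiset.cons_coe, Multiset.coe_replicate,
        Multiset.cons_swap, Multiset.insert_eq_cons, ← Multiset.cons_zero (2 * (b - m)),
        add_comm (Multiset.replicate (2 * a) (2 * m + 1)) _, Multiset.cons_add,
        Multiset.cons_add, zero_add]
    · refine List.pairwise_cons.mpr ⟨?_, List.pairwise_cons.mpr ⟨?_, List.pairwise_replicate.mpr (Or.inr le_rfl)⟩⟩
      · intro y hy
        rcases List.mem_cons.mp hy with rfl | hy
        · omega
        · rw [List.eq_of_mem_replicate hy]; omega
      · intro y hy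
        rw [List.eq_of_mem_replicate hy]; omega
  have hcardL : Multiset.card lam = 2 * a + 2 := by
    rw [hlam]; simp
  have hcardM : Multiset.card mu = 2 * a + 2 := by
    rw [hmu]; simp
  obtain ⟨X, hX⟩ : ∃ X, 2 * a * (2 * m + 1) = X := ⟨_, rfl⟩
  have hX1 : (2 * a + 1) * (2 * m + 1) = X + (2 * m + 1) := by rw [← hX]; ring
  have hsumL : lam.sum = X + 2 * b := by
    rw [hlam]
    simp [Multiset.sum_replicate, smul_eq_mul]
    rw [hX]
    omega
  have hsumM : mu.sum = X + 2 * b := by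
    rw [hmu]
    simp [Multiset.sum_replicate, smul_eq_mul]
    rw [hX]
    omega
  -- topSum computations
  have htopL : ∀ k, k ≤ 2 * a + 1 → topSum lam k = k * (2 * m + 1) := by
    intro k hk
    rw [topSum_eq_drop, hcardL, hsortL]
    rcases Nat.eq_zero_or_pos k with rfl | hk1
    · rw [List.drop_eq_nil_of_le (by simp)]
      simp
    · have h1 : 2 * a + 2 - k = (2 * a + 1 - k) + 1 := by omega
      rw [h1, List.drop_succ_cons, List.drop_replicate, List.sum_replicate, smul_eq_mul]
      congr 1
      omega
  have htopM : ∀ k, k ≤ 2 * a → topSum mu k = k * (2 * m + 1) := by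
    intro k hk
    rw [topSum_eq_drop, hcardM, hsortM]
    rcases Nat.eq_zero_or_pos k with rfl | hk1
    · rw [List.drop_eq_nil_of_le (by simp)]
      simp
    · have h1 : 2 * a + 2 - k = (2 * a - k) + 1 + 1 := by omega
      rw [h1, List.drop_succ_cons, List.drop_succ_cons, List.drop_replicate, List.sum_replicate,
        smul_eq_mul]
      congr 1
      omega
  have htopMmid : topSum mu (2 * a + 1) = X + 2 * m := by
    rw [topSum_eq_drop, hcardM, hsortM]
    have h1 : 2 * a + 2 - (2 * a + 1) = 0 + 1 := by omega
    rw [h1, List.drop_succ_cons, List.drop_zero]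
    simp [List.sum_cons, List.sum_replicate, smul_eq_mul, ← hX]
    ring
  have htopLtop : ∀ k, 2 * a + 2 ≤ k → topSum lam k = X + 2 * b := by
    intro k hk
    rw [topSum_of_card_le (by omega), hsumL]
  have htopMtop : ∀ k, 2 * a + 2 ≤ k → topSum mu k = X + 2 * b := by
    intro k hk
    rw [topSum_of_card_le (by omega), hsumM]
  refine ⟨hsumM.trans hsumL.symm, ?_, ?_, ?_⟩
  · -- symplectic
    intro p hp
    have hp' : p % 2 = 1 := Nat.odd_iff.mp hp
    rw [hmu]
    rw [Multiset.count_add, Multiset.count_replicate]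
    have h1 : p ≠ 2 * m := by omega
    have h2 : p ≠ 2 * (b - m) := by omega
    have h3 : Multiset.count p ({2 * m, 2 * (b - m)} : Multiset ℕ) = 0 := by
      rw [Multiset.insert_eq_cons, Multiset.count_cons_of_ne h1, Multiset.count_singleton,
        if_neg h2]
    rw [h3, add_zero]
    split
    · exact ⟨a, by ring⟩
    · exact Even.zero
  · -- Dominates lam mu
    intro k
    rcases Nat.lt_or_ge k (2 * a + 1) with h | h
    · rw [htopM k (by omega), htopL k (by omega)]
    · rcases Nat.eq_or_lt_of_le h with rfl | h2
      · rw [htopMmid, htopL _ le_rfl, hX1]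
        omega
      · rw [htopMtop k (by omega), htopLtop k (by omega)]
  · -- maximality
    intro nu hsum hsymp hdom k
    rcases Nat.lt_or_ge k (2 * a + 1) with h | h
    · exact (hdom k).trans_eq (by rw [htopL k (by omega), htopM k (by omega)])
    rcases Nat.eq_or_lt_of_le h with rfl | h2
    swap
    · exact (hdom k).trans_eq (by rw [htopLtop k (by omega), htopMtop k (by omega)])
    rw [htopMmid]
    by_contra hcon
    push_neg at hcon
    obtain ⟨T, hTdef⟩ : ∃ T, topSum nu (2 * a + 1) = T := ⟨_, rfl⟩
    rw [hTdef] at hcon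
    have hd := hdom (2 * a + 1)
    rw [htopL _ le_rfl, hTdef, hX1] at hd
    have hnusum : nu.sum = X + 2 * b := by rw [hsum, hsumL]
    have hcard : 2 * a + 2 ≤ Multiset.card nu := by
      by_contra hcc
      push_neg at hcc
      have h0 := topSum_of_card_le (s := nu) (k := 2 * a + 1) (by omega)
      rw [hTdef, hnusum] at h0
      omega
    have hTeq : T = X + (2 * m + 1) := by omega
    set N := nu.sort (· ≤ ·) with hNdef
    have hNcoe : (N : Multiset ℕ) = nu := Multiset.sort_eq _ _
    have hNlen : N.length = Multiset.card nu := Multiset.length_sort _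
    have hNsum : N.sum = X + 2 * b := by rw [hNdef, sum_sort, hnusum]
    have hle : ∀ x ∈ N, x ≤ 2 * m + 1 := by
      intro x hx
      have hx' : x ∈ nu := by rw [← hNcoe]; exact hx
      have h1 := mem_le_topSum_one nu x hx'
      have h2 := hdom 1
      rw [htopL 1 (by omega), one_mul] at h2
      omega
    have hTdrop : (N.drop (Multiset.card nu - (2 * a + 1))).sum = T := by
      rw [← hTdef, topSum_eq_drop]
    have hDlen : (N.drop (Multiset.card nu - (2 * a + 1))).length = 2 * a + 1 := by
      rw [List.length_drop, hNlen]; omega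
    have hDall : ∀ x ∈ N.drop (Multiset.card nu - (2 * a + 1)), x = 2 * m + 1 := by
      apply all_eq_of_sum_eq (fun x hx => hle x (List.mem_of_mem_drop hx))
      rw [hDlen, hX1, hTdrop, hTeq]
    have hsplitsum : (N.take (Multiset.card nu - (2 * a + 1))).sum
        + (N.drop (Multiset.card nu - (2 * a + 1))).sum = N.sum := by
      rw [← List.sum_append, List.take_append_drop]
    have hcount : List.count (2 * m + 1) N = 2 * a + 1 := by
      conv_lhs => rw [← List.take_append_drop (Multiset.card nu - (2 * a + 1)) N]
      rw [List.count_append]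
      have hc1 : List.count (2 * m + 1) (N.take (Multiset.card nu - (2 * a + 1))) = 0 := by
        rw [List.count_eq_zero]
        intro hmem
        have h1 := List.single_le_sum (fun x _ => Nat.zero_le x) _ hmem
        omega
      have hc2 : List.count (2 * m + 1) (N.drop (Multiset.card nu - (2 * a + 1)))
          = 2 * a + 1 := by
        exact (List.count_eq_length.mpr (fun x hx => (hDall x hx).symm)).trans hDlen
      omega
    have heven : Even (Multiset.count (2 * m + 1) nu) := hsymp _ (Nat.odd_iff.mpr (by omega))
    rw [← hNcoe, Multiset.coe_count, hcount] at heven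
    have := Nat.even_iff.mp heven
    omega
end
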